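/- Let μ > 0 and ℏ > 0 be real constants and let F, G : ℝ → ℝ be continuous. Then for every fixed u, the function v ↦ T_S(u,v) is differentiable and its derivative equals ∂T_S/∂v (u,v) = G(v)·(μ/(2ℏ²))·∫_0^u F(u')·(u'/4) du' + G(v)·(μ/(2ℏ²))² · ∫_0^v G(v') (∫_0^u F(u')·(u'/4)·F̃(u,u')·₀F₁(;2; (μ/(2ℏ²))·G̃(v,v')·F̃(u,u')) du') dv', where ₀F₁(;2;z) = Σ_{n=0}^∞ zⁿ/(n!·(n+1)!). -/

import Mathlib

open MeasureTheory intervalIntegral Set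



/-- The confluent hypergeometric limit function ₀F₁(;1;z) = Σ_{n=0}^∞ zⁿ/(n!)². -/
noncomputable def hyp0F1one (z : ℝ) : ℝ := ∑' n : ℕ, z ^ n / ((n.factorial : ℝ)) ^ 2

/-- The confluent hypergeometric limit function ₀F₁(;2;z) = Σ_{n=0}^∞ zⁿ/(n!·(n+1)!). -/
noncomputable def hyp0F1two (z : ℝ) : ℝ :=
  ∑' n : ℕ, z ^ n / ((n.factorial : ℝ) * ((n + 1).factorial : ℝ))

/-- The time kernel factor T_S(u,v). -/
noncomputable def TS (μ hbar : ℝ) (F G : ℝ → ℝ) (u v : ℝ) : ℝ :=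
  u / 4 + μ / (2 * hbar ^ 2) *
    ∫ v' in (0:ℝ)..v, G v' *
      ∫ u' in (0:ℝ)..u, F u' * (u' / 4) *
        hyp0F1one (μ / (2 * hbar ^ 2) * (∫ s in v'..v, G s) * (∫ s in u'..u, F s))


noncomputable def hypAux (z : ℝ) : ℝ := ∑' n : ℕ, z ^ n / (((n+1).factorial : ℝ)) ^ 2


lemma series_summable (a : ℕ → ℝ) (C K : ℝ) (hb : ∀ n, |a n| ≤ C * K ^ n / n.factorial)
    (z : ℝ) : Summable (fun n => a n * z ^ n) := by
  apply Summable.of_norm_bounded (g := fun n => C * (K * |z|) ^ n / n.factorial)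
  · simpa [mul_div_assoc] using (Real.summable_pow_div_factorial (K * |z|)).mul_left C
  · intro n
    have : ‖a n * z ^ n‖ = |a n| * |z| ^ n := by
      rw [Real.norm_eq_abs, abs_mul, abs_pow]
    rw [this, mul_pow, show C * (K ^ n * |z| ^ n) / n.factorial
        = C * K ^ n / n.factorial * |z| ^ n by ring]
    exact mul_le_mul_of_nonneg_right (hb n) (pow_nonneg (abs_nonneg z) n)

lemma series_hasDerivAt (a : ℕ → ℝ) (C K : ℝ) (hb : ∀ n, |a n| ≤ C * K ^ n / n.factorial)
    (z : ℝ) :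
    HasDerivAt (fun y => ∑' n, a n * y ^ n) (∑' n : ℕ, a (n + 1) * (n + 1) * z ^ n) z := by
  set R : ℝ := |z| + 1 with hR
  have hR1 : 1 ≤ R := by rw [hR]; linarith [abs_nonneg z]
  have hRpos : 0 < R := by positivity
  have hzR : z ∈ Metric.ball (0:ℝ) R := by
    simp [Real.norm_eq_abs, hR]
  have hC0 : 0 ≤ C := by
    have := hb 0
    have h0 : (0:ℝ) ≤ C * K ^ 0 / Nat.factorial 0 := le_trans (abs_nonneg _) this
    simpa using h0
  set q : ℝ := (|K| + 1) * (2 * R) with hq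
  have key : ∀ n : ℕ, ∀ y ∈ Metric.ball (0:ℝ) R,
      ‖a n * ((n : ℝ) * y ^ (n - 1))‖ ≤ C * q ^ n / n.factorial := by
    intro n y hy
    have hyR : |y| ≤ R := by
      have := mem_ball_zero_iff.mp hy
      simpa [Real.norm_eq_abs] using this.le
    have hy0 : 0 ≤ |y| := abs_nonneg y
    have hmain : C * K ^ n * ((n : ℝ) * |y| ^ (n - 1)) ≤ C * q ^ n := by
      have h1 : (n : ℝ) ≤ 2 ^ n := by exact_mod_cast (Nat.lt_two_pow_self (n := n)).le
      have h2 : |y| ^ (n - 1) ≤ R ^ n := by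
        calc |y| ^ (n-1) ≤ R ^ (n-1) := pow_le_pow_left₀ hy0 hyR _
          _ ≤ R ^ n := pow_le_pow_right₀ hR1 (Nat.sub_le n 1)
      have h3 : K ^ n ≤ |K| ^ n := le_abs_self _ |>.trans (by rw [abs_pow])
      have h4 : |K| ^ n ≤ (|K|+1) ^ n := pow_le_pow_left₀ (abs_nonneg K) (by linarith) n
      calc C * K ^ n * ((n:ℝ) * |y| ^ (n-1)) ≤ C * (|K|+1) ^ n * (2 ^ n * R ^ n) := by
            apply mul_le_mul
            · exact mul_le_mul_of_nonneg_left (h3.trans h4) hC0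
            · exact mul_le_mul h1 h2 (by positivity) (by positivity)
            · positivity
            · positivity
        _ = C * q ^ n := by rw [hq, mul_pow, mul_pow]; ring
    calc ‖a n * ((n : ℝ) * y ^ (n - 1))‖ = |a n| * ((n : ℝ) * |y| ^ (n - 1)) := by
          rw [Real.norm_eq_abs, abs_mul, abs_mul, abs_pow, Nat.abs_cast]
      _ ≤ (C * K ^ n / n.factorial) * ((n : ℝ) * |y| ^ (n - 1)) := by
          apply mul_le_mul_of_nonneg_right (hb n); positivity
      _ ≤ C * q ^ n / n.factorial := by
          rw [div_mul_eq_mul_div, div_le_div_iff₀ (by positivity) (by positivity)]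
          exact mul_le_mul_of_nonneg_right hmain (by positivity)
  have hu : Summable (fun n => C * q ^ n / n.factorial) := by
    simpa [mul_div_assoc] using (Real.summable_pow_div_factorial q).mul_left C
  have hder := hasDerivAt_tsum_of_isPreconnected hu Metric.isOpen_ball
    ((convex_ball (0:ℝ) R).isPreconnected)
    (fun n y _ => (hasDerivAt_pow n y).const_mul (a n))
    (fun n y hy => key n y hy) hzR (series_summable a C K hb z) hzR
  -- now fix the derivative value: shift the index
  have hsum' : Summable (fun n : ℕ => a n * ((n:ℝ) * z ^ (n-1))) :=
    Summable.of_norm_bounded hu (fun n => key n z hzR)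
  have hshift : ∑' n : ℕ, a n * ((n:ℝ) * z ^ (n-1))
      = ∑' n : ℕ, a (n+1) * (n+1) * z ^ n := by
    rw [Summable.tsum_eq_zero_add hsum']
    simp only [Nat.cast_zero, zero_mul, mul_zero, zero_add, Nat.cast_add, Nat.cast_one,
      Nat.add_sub_cancel]
    exact tsum_congr fun n => by ring
  rw [← hshift]
  exact hder



lemma fact1 (n : ℕ) : (1:ℝ) ≤ (n.factorial : ℝ) := by exact_mod_cast n.factorial_pos

lemma hb_one : ∀ n : ℕ, |(1:ℝ) / (n.factorial : ℝ) ^ 2| ≤ 1 * 1 ^ n / n.factorial := by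
  intro n
  rw [abs_of_nonneg (by positivity), one_pow, one_mul]
  apply one_div_le_one_div_of_le (by positivity)
  nlinarith [fact1 n]

lemma hb_two : ∀ n : ℕ, |(1:ℝ) / (n.factorial * (n+1).factorial : ℝ)| ≤ 1 * 1 ^ n / n.factorial := by
  intro n
  rw [abs_of_nonneg (by positivity), one_pow, one_mul]
  apply one_div_le_one_div_of_le (by positivity)
  nlinarith [fact1 n, fact1 (n+1)]

lemma hb_aux : ∀ n : ℕ, |(1:ℝ) / ((n+1).factorial : ℝ) ^ 2| ≤ 1 * 1 ^ n / n.factorial := by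
  intro n
  rw [abs_of_nonneg (by positivity), one_pow, one_mul]
  apply one_div_le_one_div_of_le (by positivity)
  have h1 := fact1 n
  have h2 := fact1 (n+1)
  have h3 : (n.factorial : ℝ) ≤ (n+1).factorial := by
    exact_mod_cast Nat.factorial_le (Nat.le_succ n)
  nlinarith

lemma hyp_one_eq (z : ℝ) : hyp0F1one z = ∑' n : ℕ, (1 / (n.factorial : ℝ) ^ 2) * z ^ n :=
  tsum_congr fun n => by ring

lemma hyp_two_eq (z : ℝ) :
    hyp0F1two z = ∑' n : ℕ, (1 / ((n.factorial : ℝ) * ((n+1).factorial : ℝ))) * z ^ n :=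
  tsum_congr fun n => by ring

lemma hyp_aux_eq (z : ℝ) : hypAux z = ∑' n : ℕ, (1 / ((n+1).factorial : ℝ) ^ 2) * z ^ n :=
  tsum_congr fun n => by ring

lemma summable_one (z : ℝ) : Summable (fun n : ℕ => z ^ n / (n.factorial : ℝ) ^ 2) := by
  have := series_summable _ 1 1 hb_one z
  apply this.congr; intro n; ring

lemma summable_two (z : ℝ) :
    Summable (fun n : ℕ => z ^ n / ((n.factorial : ℝ) * ((n+1).factorial : ℝ))) := by
  have := series_summable _ 1 1 hb_two z
  apply this.congr; intro n; ring

lemma summable_aux (z : ℝ) : Summable (fun n : ℕ => z ^ n / ((n+1).factorial : ℝ) ^ 2) := by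
  have := series_summable _ 1 1 hb_aux z
  apply this.congr; intro n; ring

lemma factsucc (n : ℕ) : ((n+1).factorial : ℝ) = (n+1) * n.factorial := by
  exact_mod_cast Nat.factorial_succ n

/-- F1 -/
lemma hasDerivAt_hyp_one (z : ℝ) : HasDerivAt hyp0F1one (hyp0F1two z) z := by
  have h := series_hasDerivAt _ 1 1 hb_one z
  have e1 : (fun y => ∑' n : ℕ, (1 / (n.factorial : ℝ) ^ 2) * y ^ n) = hyp0F1one := by
    funext y; exact (hyp_one_eq y).symm
  rw [e1] at h
  convert h using 1
  rw [hyp0F1two]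
  apply tsum_congr; intro n
  rw [factsucc n]
  have h1 := fact1 n
  field_simp

/-- coefficients for t * hyp0F1two (b*t) -/
noncomputable def coefB (b : ℝ) : ℕ → ℝ
  | 0 => 0
  | (m+1) => b ^ m / ((m.factorial : ℝ) * ((m+1).factorial : ℝ))

/-- coefficients for t * hypAux (b*t) -/
noncomputable def coefC (b : ℝ) : ℕ → ℝ
  | 0 => 0
  | (m+1) => b ^ m / (((m+1).factorial : ℝ)) ^ 2

lemma hb_coefB (b : ℝ) : ∀ n, |coefB b n| ≤ 1 * (|b| + 1) ^ n / n.factorial := by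
  intro n
  match n with
  | 0 => simp [coefB]
  | (m+1) =>
    show |b ^ m / ((m.factorial : ℝ) * ((m+1).factorial : ℝ))| ≤ _
    rw [abs_div, abs_pow, abs_of_nonneg
      (show (0:ℝ) ≤ (m.factorial : ℝ) * ((m+1).factorial : ℝ) by positivity), one_mul]
    apply div_le_div₀ (by positivity)
    · calc |b| ^ m ≤ (|b|+1) ^ m := pow_le_pow_left₀ (abs_nonneg b) (by linarith) m
        _ ≤ (|b|+1) ^ (m+1) := pow_le_pow_right₀ (by linarith [abs_nonneg b]) (Nat.le_succ m)
    · positivity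
    · nth_rewrite 1 [← one_mul ((m+1).factorial : ℝ)]
      exact mul_le_mul_of_nonneg_right (fact1 m) (by positivity)

lemma hb_coefC (b : ℝ) : ∀ n, |coefC b n| ≤ 1 * (|b| + 1) ^ n / n.factorial := by
  intro n
  match n with
  | 0 => simp [coefC]
  | (m+1) =>
    show |b ^ m / (((m+1).factorial : ℝ)) ^ 2| ≤ _
    rw [abs_div, abs_pow, abs_of_nonneg
      (show (0:ℝ) ≤ ((m+1).factorial : ℝ) ^ 2 by positivity), one_mul]
    apply div_le_div₀ (by positivity)
    · calc |b| ^ m ≤ (|b|+1) ^ m := pow_le_pow_left₀ (abs_nonneg b) (by linarith) m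
        _ ≤ (|b|+1) ^ (m+1) := pow_le_pow_right₀ (by linarith [abs_nonneg b]) (Nat.le_succ m)
    · positivity
    · have h2 := fact1 (m+1)
      nlinarith [fact1 (m+1)]

lemma coefB_series (b t : ℝ) : t * hyp0F1two (b * t) = ∑' n : ℕ, coefB b n * t ^ n := by
  rw [Summable.tsum_eq_zero_add (series_summable _ 1 (|b|+1) (hb_coefB b) t)]
  show t * hyp0F1two (b*t) = coefB b 0 * t ^ 0 + _
  simp only [coefB, zero_mul, pow_zero, zero_add]
  rw [hyp0F1two, ← tsum_mul_left]
  apply tsum_congr; intro n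
  rw [mul_pow]
  ring

lemma coefC_series (b t : ℝ) : t * hypAux (b * t) = ∑' n : ℕ, coefC b n * t ^ n := by
  rw [Summable.tsum_eq_zero_add (series_summable _ 1 (|b|+1) (hb_coefC b) t)]
  show t * hypAux (b*t) = coefC b 0 * t ^ 0 + _
  simp only [coefC, zero_mul, pow_zero, zero_add]
  rw [hypAux, ← tsum_mul_left]
  apply tsum_congr; intro n
  rw [mul_pow]
  ring

/-- F3 -/
lemma hasDerivAt_B (b t : ℝ) :
    HasDerivAt (fun t => t * hyp0F1two (b * t)) (hyp0F1one (b * t)) t := by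
  have h := series_hasDerivAt _ 1 (|b|+1) (hb_coefB b) t
  have e1 : (fun y => ∑' n : ℕ, coefB b n * y ^ n) = fun t => t * hyp0F1two (b * t) := by
    funext y; exact (coefB_series b y).symm
  rw [e1] at h
  convert h using 1
  rw [hyp0F1one]
  apply tsum_congr; intro n
  show (b*t) ^ n / _ = b ^ n / ((n.factorial : ℝ) * ((n+1).factorial : ℝ)) * (n+1) * t ^ n
  rw [factsucc n, mul_pow]
  have h1 := fact1 n
  field_simp

/-- F4 -/
lemma hasDerivAt_C (b t : ℝ) :
    HasDerivAt (fun t => t * hypAux (b * t)) (hyp0F1two (b * t)) t := by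
  have h := series_hasDerivAt _ 1 (|b|+1) (hb_coefC b) t
  have e1 : (fun y => ∑' n : ℕ, coefC b n * y ^ n) = fun t => t * hypAux (b * t) := by
    funext y; exact (coefC_series b y).symm
  rw [e1] at h
  convert h using 1
  rw [hyp0F1two]
  apply tsum_congr; intro n
  show (b*t) ^ n / _ = b ^ n / (((n+1).factorial : ℝ)) ^ 2 * (n+1) * t ^ n
  rw [factsucc n, mul_pow]
  have h1 := fact1 n
  field_simp

lemma continuous_hyp_one : Continuous hyp0F1one :=
  continuous_iff_continuousAt.mpr fun z => (hasDerivAt_hyp_one z).continuousAt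

lemma continuous_hyp_two : Continuous hyp0F1two := by
  apply continuous_iff_continuousAt.mpr
  intro z
  have h := series_hasDerivAt _ 1 1 hb_two z
  have e1 : (fun y => ∑' n : ℕ, (1 / ((n.factorial : ℝ) * ((n+1).factorial : ℝ))) * y ^ n)
      = hyp0F1two := by funext y; exact (hyp_two_eq y).symm
  rw [e1] at h
  exact h.continuousAt

lemma continuous_hypAux : Continuous hypAux := by
  apply continuous_iff_continuousAt.mpr
  intro z
  have h := series_hasDerivAt _ 1 1 hb_aux z
  have e1 : (fun y => ∑' n : ℕ, (1 / (((n+1).factorial : ℝ)) ^ 2) * y ^ n)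
      = hypAux := by funext y; exact (hyp_aux_eq y).symm
  rw [e1] at h
  exact h.continuousAt

/-- F6 -/
lemma aux_identity (z : ℝ) : z * hypAux z = hyp0F1one z - 1 := by
  have h1 : hyp0F1one z = 1 + ∑' n : ℕ, z ^ (n+1) / ((n+1).factorial : ℝ) ^ 2 := by
    rw [hyp0F1one, Summable.tsum_eq_zero_add (summable_one z)]
    norm_num
  have h2 : z * hypAux z = ∑' n : ℕ, z ^ (n+1) / ((n+1).factorial : ℝ) ^ 2 := by
    rw [hypAux, ← tsum_mul_left]
    apply tsum_congr; intro n; ring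
  rw [h1, h2]; ring

lemma exp_tsum (x : ℝ) : Real.exp x = ∑' n : ℕ, x ^ n / n.factorial := by
  rw [Real.exp_eq_exp_ℝ, NormedSpace.exp_eq_tsum_div]

/-- F7 -/
lemma hyp_one_bound (z : ℝ) : |hyp0F1one z| ≤ Real.exp |z| := by
  rw [exp_tsum, hyp0F1one]
  have hs : Summable (fun n : ℕ => ‖z ^ n / (n.factorial : ℝ) ^ 2‖) := by
    apply Summable.of_nonneg_of_le (fun n => norm_nonneg _)
      (fun n => ?_) (Real.summable_pow_div_factorial |z|)
    rw [Real.norm_eq_abs, abs_div, abs_pow, abs_of_nonneg (by positivity : (0:ℝ) ≤ (n.factorial:ℝ)^2)]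
    apply div_le_div₀ (by positivity) le_rfl (by positivity)
    nlinarith [fact1 n]
  calc |∑' n : ℕ, z ^ n / (n.factorial : ℝ) ^ 2| ≤ ∑' n : ℕ, ‖z ^ n / (n.factorial : ℝ) ^ 2‖ :=
        norm_tsum_le_tsum_norm hs
    _ ≤ ∑' n : ℕ, |z| ^ n / n.factorial := by
        apply Summable.tsum_le_tsum _ hs (Real.summable_pow_div_factorial |z|)
        intro n
        rw [Real.norm_eq_abs, abs_div, abs_pow, abs_of_nonneg (by positivity : (0:ℝ) ≤ (n.factorial:ℝ)^2)]
        apply div_le_div₀ (by positivity) le_rfl (by positivity)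
        nlinarith [fact1 n]

lemma hyp_two_bound (z : ℝ) : |hyp0F1two z| ≤ Real.exp |z| := by
  rw [exp_tsum, hyp0F1two]
  have hs : Summable (fun n : ℕ => ‖z ^ n / ((n.factorial : ℝ) * ((n+1).factorial : ℝ))‖) := by
    apply Summable.of_nonneg_of_le (fun n => norm_nonneg _)
      (fun n => ?_) (Real.summable_pow_div_factorial |z|)
    rw [Real.norm_eq_abs, abs_div, abs_pow,
      abs_of_nonneg (by positivity : (0:ℝ) ≤ (n.factorial:ℝ) * ((n+1).factorial:ℝ))]
    apply div_le_div₀ (by positivity) le_rfl (by positivity)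
    nlinarith [fact1 n, fact1 (n+1)]
  calc |∑' n : ℕ, z ^ n / ((n.factorial : ℝ) * ((n+1).factorial : ℝ))|
      ≤ ∑' n : ℕ, ‖z ^ n / ((n.factorial : ℝ) * ((n+1).factorial : ℝ))‖ :=
        norm_tsum_le_tsum_norm hs
    _ ≤ ∑' n : ℕ, |z| ^ n / n.factorial := by
        apply Summable.tsum_le_tsum _ hs (Real.summable_pow_div_factorial |z|)
        intro n
        rw [Real.norm_eq_abs, abs_div, abs_pow,
          abs_of_nonneg (by positivity : (0:ℝ) ≤ (n.factorial:ℝ) * ((n+1).factorial:ℝ))]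
        apply div_le_div₀ (by positivity) le_rfl (by positivity)
        nlinarith [fact1 n, fact1 (n+1)]


lemma master (a b : ℝ) (f g : ℝ → ℝ) (hf : Continuous f) (hg : Continuous g)
    (φ φ' : ℝ → ℝ → ℝ) (hφc : Continuous fun p : ℝ × ℝ => φ p.1 p.2)
    (hφ'c : Continuous fun p : ℝ × ℝ => φ' p.1 p.2)
    (hd : ∀ β t, HasDerivAt (fun s => φ β s) (φ' β t) t)
    (hbd : ∀ β t, |φ' β t| ≤ (1 + |β|) * Real.exp (|β| * |t|)) (t₀ : ℝ) :
    HasDerivAt (fun t => ∫ x in a..b, f x * φ (g x) t)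
      (∫ x in a..b, f x * φ' (g x) t₀) t₀ := by
  obtain ⟨C, hC⟩ := (isCompact_uIcc (a := a) (b := b)).exists_bound_of_continuousOn
    hg.continuousOn
  set C' : ℝ := max C 0 with hC'
  have hC'0 : 0 ≤ C' := le_max_right _ _
  have hgC : ∀ x ∈ uIcc a b, |g x| ≤ C' := fun x hx =>
    (hC x hx).trans (le_max_left _ _)
  set K : ℝ := (1 + C') * Real.exp (C' * (|t₀| + 1)) with hK
  have hcont : ∀ t, Continuous fun x => f x * φ (g x) t := fun t =>
    hf.mul (hφc.comp (hg.prodMk continuous_const))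
  have hcont' : ∀ t, Continuous fun x => f x * φ' (g x) t := fun t =>
    hf.mul (hφ'c.comp (hg.prodMk continuous_const))
  have := (intervalIntegral.hasDerivAt_integral_of_dominated_loc_of_deriv_le
    (F := fun t x => f x * φ (g x) t) (F' := fun t x => f x * φ' (g x) t)
    (a := a) (b := b) (x₀ := t₀) (bound := fun x => |f x| * K)
    (μ := volume) (s := Metric.ball t₀ 1) (Metric.ball_mem_nhds t₀ one_pos)
    (Filter.Eventually.of_forall fun t => (hcont t).aestronglyMeasurable.restrict)
    ((hcont t₀).intervalIntegrable a b)
    ((hcont' t₀).aestronglyMeasurable.restrict)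
    (ae_of_all _ fun x hx t ht => ?_)
    (((hf.abs).mul continuous_const).intervalIntegrable a b)
    (ae_of_all _ fun x hx t ht => ((hd (g x) t).const_mul (f x)))).2
  · exact this
  · have hx' : x ∈ uIcc a b := uIoc_subset_uIcc hx
    have h1 : |g x| ≤ C' := hgC x hx'
    have h2 : |t| ≤ |t₀| + 1 := by
      have := Metric.mem_ball.mp ht
      rw [Real.dist_eq] at this
      have := abs_sub_abs_le_abs_sub t t₀
      linarith
    rw [Real.norm_eq_abs, abs_mul]
    apply mul_le_mul_of_nonneg_left _ (abs_nonneg (f x))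
    calc |φ' (g x) t| ≤ (1 + |g x|) * Real.exp (|g x| * |t|) := hbd _ _
      _ ≤ K := by
          rw [hK]
          apply mul_le_mul (by linarith) (Real.exp_le_exp.mpr ?_) (Real.exp_pos _).le
            (by positivity)
          apply mul_le_mul h1 h2 (abs_nonneg t) hC'0

theorem stmt11 (μ hbar : ℝ) (hμ : 0 < μ) (hhbar : 0 < hbar)
    (F G : ℝ → ℝ) (hF : Continuous F) (hG : Continuous G) :
    ∀ u v : ℝ,
      HasDerivAt (fun w : ℝ => TS μ hbar F G u w)
        (G v * (μ / (2 * hbar ^ 2)) * (∫ u' in (0:ℝ)..u, F u' * (u' / 4)) +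
          G v * (μ / (2 * hbar ^ 2)) ^ 2 *
            ∫ v' in (0:ℝ)..v, G v' *
              ∫ u' in (0:ℝ)..u, F u' * (u' / 4) * (∫ s in u'..u, F s) *
                hyp0F1two (μ / (2 * hbar ^ 2) * (∫ s in v'..v, G s) *
                  (∫ s in u'..u, F s))) v := by
  intro u v
  set c : ℝ := μ / (2 * hbar ^ 2) with hc
  set A : ℝ → ℝ := fun x => F x * (x / 4) with hA
  have hAx : ∀ x : ℝ, F x * (x / 4) = A x := fun _ => rfl
  have hAc : Continuous A := hF.mul (continuous_id.div_const 4)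
  set H : ℝ → ℝ := fun x => ∫ s in (0:ℝ)..x, G s with hH
  have hHd : ∀ x, HasDerivAt H (G x) x := fun x =>
    intervalIntegral.integral_hasDerivAt_right (hG.intervalIntegrable _ _)
      (hG.stronglyMeasurableAtFilter _ _) hG.continuousAt
  have hHc : Continuous H := continuous_iff_continuousAt.mpr fun x => (hHd x).continuousAt
  have hH0 : H 0 = 0 := intervalIntegral.integral_same
  set B : ℝ → ℝ := fun x => ∫ s in x..u, F s with hB
  have hBx : ∀ x : ℝ, (∫ s in x..u, F s) = B x := fun _ => rfl
  have hBeq : ∀ x, B x = (∫ s in (0:ℝ)..u, F s) - ∫ s in (0:ℝ)..x, F s := fun x =>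
    (intervalIntegral.integral_interval_sub_left (hF.intervalIntegrable _ _)
      (hF.intervalIntegrable _ _)).symm
  have hBc : Continuous B := by
    have h : B = fun x => (∫ s in (0:ℝ)..u, F s) - ∫ s in (0:ℝ)..x, F s := funext hBeq
    rw [h]
    exact continuous_const.sub (continuous_iff_continuousAt.mpr fun x =>
      (intervalIntegral.integral_hasDerivAt_right (hF.intervalIntegrable _ _)
        (hF.stronglyMeasurableAtFilter _ _) hF.continuousAt).continuousAt)
  have hGt : ∀ w r : ℝ, (∫ s in r..w, G s) = H w - H r := fun w r =>
    (intervalIntegral.integral_interval_sub_left (hG.intervalIntegrable _ _)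
      (hG.intervalIntegrable _ _)).symm
  set g : ℝ → ℝ := fun x => c * B x with hg
  have hgx : ∀ x : ℝ, c * B x = g x := fun _ => rfl
  have hgc : Continuous g := continuous_const.mul hBc
  -- joint continuity helpers
  have hj1 : Continuous fun p : ℝ × ℝ => hyp0F1one (p.1 * p.2) :=
    continuous_hyp_one.comp (continuous_fst.mul continuous_snd)
  have hj2 : Continuous fun p : ℝ × ℝ => hyp0F1two (p.1 * p.2) :=
    continuous_hyp_two.comp (continuous_fst.mul continuous_snd)
  have hjA : Continuous fun p : ℝ × ℝ => hypAux (p.1 * p.2) :=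
    continuous_hypAux.comp (continuous_fst.mul continuous_snd)
  -- master instances
  have inst1 : ∀ f : ℝ → ℝ, Continuous f → ∀ t₀ : ℝ,
      HasDerivAt (fun t => ∫ x in (0:ℝ)..u, f x * (t * hyp0F1two (g x * t)))
        (∫ x in (0:ℝ)..u, f x * hyp0F1one (g x * t₀)) t₀ := by
    intro f hf' t₀
    apply master 0 u f g hf' hgc (fun β t => t * hyp0F1two (β * t))
      (fun β t => hyp0F1one (β * t)) (continuous_snd.mul hj2) hj1
      (fun β t => hasDerivAt_B β t) (fun β t => ?_) t₀
    calc |hyp0F1one (β * t)| ≤ Real.exp |β * t| := hyp_one_bound _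
      _ = Real.exp (|β| * |t|) := by rw [abs_mul]
      _ ≤ (1 + |β|) * Real.exp (|β| * |t|) := by
          nlinarith [Real.exp_pos (|β| * |t|), abs_nonneg β]
  have inst2 : ∀ f : ℝ → ℝ, Continuous f → ∀ t₀ : ℝ,
      HasDerivAt (fun t => ∫ x in (0:ℝ)..u, f x * (t * hypAux (g x * t)))
        (∫ x in (0:ℝ)..u, f x * hyp0F1two (g x * t₀)) t₀ := by
    intro f hf' t₀
    apply master 0 u f g hf' hgc (fun β t => t * hypAux (β * t))
      (fun β t => hyp0F1two (β * t)) (continuous_snd.mul hjA) hj2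
      (fun β t => hasDerivAt_C β t) (fun β t => ?_) t₀
    calc |hyp0F1two (β * t)| ≤ Real.exp |β * t| := hyp_two_bound _
      _ = Real.exp (|β| * |t|) := by rw [abs_mul]
      _ ≤ (1 + |β|) * Real.exp (|β| * |t|) := by
          nlinarith [Real.exp_pos (|β| * |t|), abs_nonneg β]
  -- continuity of inner integrals in the outer variable
  have hInner1c : ∀ w : ℝ, Continuous fun r =>
      ∫ x in (0:ℝ)..u, A x * hyp0F1one (g x * (H w - H r)) := by
    intro w
    apply intervalIntegral.continuous_parametric_intervalIntegral_of_continuous'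
      (f := fun r x => A x * hyp0F1one (g x * (H w - H r)))
    exact (hAc.comp continuous_snd).mul (continuous_hyp_one.comp
      ((hgc.comp continuous_snd).mul (continuous_const.sub (hHc.comp continuous_fst))))
  have hInner2c : ∀ w : ℝ, Continuous fun r =>
      ∫ x in (0:ℝ)..u, A x * B x * hyp0F1two (g x * (H w - H r)) := by
    intro w
    apply intervalIntegral.continuous_parametric_intervalIntegral_of_continuous'
      (f := fun r x => A x * B x * hyp0F1two (g x * (H w - H r)))
    exact ((hAc.mul hBc).comp continuous_snd).mul (continuous_hyp_two.comp
      ((hgc.comp continuous_snd).mul (continuous_const.sub (hHc.comp continuous_fst))))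
  -- FTC in the v' variable, first reduction
  have R1 : ∀ w : ℝ,
      (∫ r in (0:ℝ)..w, G r * ∫ x in (0:ℝ)..u, A x * hyp0F1one (g x * (H w - H r)))
        = ∫ x in (0:ℝ)..u, A x * (H w * hyp0F1two (g x * H w)) := by
    intro w
    have hJ : ∀ r : ℝ, HasDerivAt
        (fun r => - ∫ x in (0:ℝ)..u, A x * ((H w - H r) * hyp0F1two (g x * (H w - H r))))
        (G r * ∫ x in (0:ℝ)..u, A x * hyp0F1one (g x * (H w - H r))) r := by
      intro r
      have h1 := inst1 A hAc (H w - H r)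
      have h2 : HasDerivAt (fun r => H w - H r) (-G r) r := (hHd r).const_sub (H w)
      have h3 := (h1.comp r h2).neg
      exact h3.congr_deriv (by ring)
    have heq := intervalIntegral.integral_eq_sub_of_hasDerivAt
      (f := fun r => - ∫ x in (0:ℝ)..u, A x * ((H w - H r) * hyp0F1two (g x * (H w - H r))))
      (fun r _ => hJ r) ((hG.mul (hInner1c w)).intervalIntegrable 0 w)
    rw [heq]
    simp [hH0]
  have R2 : (∫ r in (0:ℝ)..v, G r * ∫ x in (0:ℝ)..u, A x * B x * hyp0F1two (g x * (H v - H r)))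
      = ∫ x in (0:ℝ)..u, A x * B x * (H v * hypAux (g x * H v)) := by
    have hJ : ∀ r : ℝ, HasDerivAt
        (fun r => - ∫ x in (0:ℝ)..u, A x * B x * ((H v - H r) * hypAux (g x * (H v - H r))))
        (G r * ∫ x in (0:ℝ)..u, A x * B x * hyp0F1two (g x * (H v - H r))) r := by
      intro r
      have h1 := inst2 (fun x => A x * B x) (hAc.mul hBc) (H v - H r)
      have h2 : HasDerivAt (fun r => H v - H r) (-G r) r := (hHd r).const_sub (H v)
      have h3 := (h1.comp r h2).neg
      exact h3.congr_deriv (by ring)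
    have heq := intervalIntegral.integral_eq_sub_of_hasDerivAt
      (f := fun r => - ∫ x in (0:ℝ)..u, A x * B x * ((H v - H r) * hypAux (g x * (H v - H r))))
      (fun r _ => hJ r) ((hG.mul (hInner2c v)).intervalIntegrable 0 v)
    rw [heq]
    simp [hH0]
  -- rewrite TS in reduced form
  have hTS : (fun w : ℝ => TS μ hbar F G u w)
      = fun w => u / 4 + c * ∫ x in (0:ℝ)..u, A x * (H w * hyp0F1two (g x * H w)) := by
    funext w
    rw [TS, ← hc, ← R1 w]
    congr 1
    congr 1
    apply intervalIntegral.integral_congr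
    intro r _
    dsimp only
    congr 1
    apply intervalIntegral.integral_congr
    intro x _
    show F x * (x / 4) * hyp0F1one (c * (∫ s in r..w, G s) * ∫ s in x..u, F s)
        = A x * hyp0F1one (g x * (H w - H r))
    rw [hGt, hBx, hAx, ← hgx]
    congr 1
    congr 1
    ring
  -- the derivative
  have main : HasDerivAt
      (fun w => u / 4 + c * ∫ x in (0:ℝ)..u, A x * (H w * hyp0F1two (g x * H w)))
      (c * ((∫ x in (0:ℝ)..u, A x * hyp0F1one (g x * H v)) * G v)) v := by
    have h := (inst1 A hAc (H v)).comp v (hHd v)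
    exact (h.const_mul c).const_add (u / 4)
  rw [hTS]
  -- identify the derivative value
  have hval : G v * c * (∫ u' in (0:ℝ)..u, F u' * (u' / 4)) +
      G v * c ^ 2 * ∫ v' in (0:ℝ)..v, G v' *
        ∫ u' in (0:ℝ)..u, F u' * (u' / 4) * (∫ s in u'..u, F s) *
          hyp0F1two (c * (∫ s in v'..v, G s) * (∫ s in u'..u, F s))
      = c * ((∫ x in (0:ℝ)..u, A x * hyp0F1one (g x * H v)) * G v) := by
    -- rewrite statement's double integral into reduced form
    have hDstmt : (∫ v' in (0:ℝ)..v, G v' *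
        ∫ u' in (0:ℝ)..u, F u' * (u' / 4) * (∫ s in u'..u, F s) *
          hyp0F1two (c * (∫ s in v'..v, G s) * (∫ s in u'..u, F s)))
        = ∫ r in (0:ℝ)..v, G r * ∫ x in (0:ℝ)..u, A x * B x * hyp0F1two (g x * (H v - H r)) := by
      apply intervalIntegral.integral_congr
      intro r _
      dsimp only
      congr 1
      apply intervalIntegral.integral_congr
      intro x _
      show F x * (x / 4) * (∫ s in x..u, F s) *
            hyp0F1two (c * (∫ s in r..v, G s) * ∫ s in x..u, F s)
          = A x * B x * hyp0F1two (g x * (H v - H r))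
      rw [hGt, hBx, hAx, ← hgx]
      congr 1
      congr 1
      ring
    have hfirst : (∫ u' in (0:ℝ)..u, F u' * (u' / 4)) = ∫ x in (0:ℝ)..u, A x :=
      intervalIntegral.integral_congr fun x _ => hAx x
    rw [hDstmt, R2, hfirst]
    -- expand hyp0F1one via aux identity
    have hsplit : (∫ x in (0:ℝ)..u, A x * hyp0F1one (g x * H v))
        = (∫ x in (0:ℝ)..u, A x) + c * ∫ x in (0:ℝ)..u, A x * B x * (H v * hypAux (g x * H v)) := by
      have hpt : ∀ x : ℝ, A x * hyp0F1one (g x * H v)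
          = A x + c * (A x * B x * (H v * hypAux (g x * H v))) := by
        intro x
        have h1 := aux_identity (c * B x * H v)
        have h2 : g x = c * B x := rfl
        rw [h2]
        linear_combination (-(A x)) * h1
      have hic := intervalIntegral.integral_congr (μ := volume) (a := (0:ℝ)) (b := u)
        (g := fun x => A x + c * (A x * B x * (H v * hypAux (g x * H v)))) (fun x _ => hpt x)
      rw [hic]
      have hint2 : IntervalIntegrable
          (fun x => c * (A x * B x * (H v * hypAux (g x * H v)))) volume 0 u := by
        apply Continuous.intervalIntegrable
        exact continuous_const.mul ((hAc.mul hBc).mul (continuous_const.mul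
          (continuous_hypAux.comp (hgc.mul continuous_const))))
      rw [intervalIntegral.integral_add (hAc.intervalIntegrable 0 u) hint2]
      rw [intervalIntegral.integral_const_mul]
    rw [hsplit]
    ring
  rw [hval]
  exact main
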